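/- arXiv:1810.07954 — 5 statements merged into one kernel-verified Lean document; each statement's English description precedes it below -/
import Mathlib

section
/- Let x_1, ..., x_t be real numbers whose overall average a satisfies a ≥ (1/c)∑_{k=1}^c x_k for all 1 ≤ c ≤ t (a dominates all prefix averages). Let 1 ≤ i_1 < i_2 < ... < i_t be integers with i_c ≥ c for each c. Then ∑_{c=1}^t (i_c − c)(x_c − a) ≥ 0. -/
theorem weighted_deviation_nonneg (t : ℕ) (x : ℕ → ℝ) (a : ℝ) (ht : 1 ≤ t)
    (ha : a = (∑ k ∈ Finset.Icc 1 t, x k) / t)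
    (hpre : ∀ c, 1 ≤ c → c ≤ t → (∑ k ∈ Finset.Icc 1 c, x k) / c ≤ a)
    (i : ℕ → ℕ)
    (hi1 : 1 ≤ i 1)
    (hmono : ∀ c c', 1 ≤ c → c < c' → c' ≤ t → i c < i c')
    (hic : ∀ c, 1 ≤ c → c ≤ t → c ≤ i c) :
    0 ≤ ∑ c ∈ Finset.Icc 1 t, ((i c : ℝ) - c) * (x c - a) := by
  have ht0 : (0:ℝ) < t := by exact_mod_cast Nat.lt_of_lt_of_le Nat.zero_lt_one ht
  set d : ℕ → ℝ := fun k => x k - a with hd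
  set w : ℕ → ℝ := fun c => if c = 0 then 0 else (i c : ℝ) - c with hw
  -- total deviation is zero
  have htot : ∑ k ∈ Finset.Icc 1 t, d k = 0 := by
    have hcard : (Finset.Icc 1 t).card = t := by
      rw [Nat.card_Icc]; omega
    simp only [hd, Finset.sum_sub_distrib, Finset.sum_const, hcard, nsmul_eq_mul]
    rw [ha]
    field_simp
    ring
  -- prefix deviation sums are ≤ 0
  have hprefix : ∀ c, c ≤ t → ∑ k ∈ Finset.Icc 1 c, d k ≤ 0 := by
    intro c hct
    rcases Nat.eq_zero_or_pos c with hc0 | hc1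
    · simp [hc0]
    · have h := hpre c hc1 hct
      have hc0 : (0:ℝ) < c := by exact_mod_cast hc1
      have hx : ∑ k ∈ Finset.Icc 1 c, x k ≤ c * a := by
        rw [div_le_iff₀ hc0] at h; linarith [h]
      have hcard : (Finset.Icc 1 c).card = c := by rw [Nat.card_Icc]; omega
      simp only [hd, Finset.sum_sub_distrib, Finset.sum_const, hcard, nsmul_eq_mul]
      linarith
  -- suffix deviation sums are ≥ 0
  have hS : ∀ c, 1 ≤ c → c ≤ t → 0 ≤ ∑ k ∈ Finset.Icc c t, d k := by
    intro c hc1 hct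
    have hsplit : ∑ k ∈ Finset.Icc 1 (c-1), d k + ∑ k ∈ Finset.Icc c t, d k
        = ∑ k ∈ Finset.Icc 1 t, d k := by
      rw [← Finset.sum_union]
      · congr 1
        ext k
        simp only [Finset.mem_union, Finset.mem_Icc]
        omega
      · rw [Finset.disjoint_left]
        intro k hk hk'
        simp only [Finset.mem_Icc] at hk hk'
        omega
    have := hprefix (c-1) (by omega)
    linarith [htot ▸ hsplit]
  -- telescoping: ∑_{c=1}^k (w c - w (c-1)) = w k
  have htel : ∀ k : ℕ, ∑ c ∈ Finset.Icc 1 k, (w c - w (c-1)) = w k := by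
    intro k
    induction k with
    | zero => simp [hw]
    | succ n ih =>
      rw [Finset.sum_Icc_succ_top (by omega), ih]
      simp
  -- Abel summation / exchange
  have key : ∑ c ∈ Finset.Icc 1 t, ((i c : ℝ) - c) * d c
      = ∑ c ∈ Finset.Icc 1 t, (w c - w (c-1)) * (∑ k ∈ Finset.Icc c t, d k) := by
    have h1 : ∑ c ∈ Finset.Icc 1 t, (w c - w (c-1)) * (∑ k ∈ Finset.Icc c t, d k)
        = ∑ c ∈ Finset.Icc 1 t, ∑ k ∈ Finset.Icc c t, (w c - w (c-1)) * d k := by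
      apply Finset.sum_congr rfl
      intro c _
      rw [Finset.mul_sum]
    rw [h1]
    rw [Finset.sum_comm' (s' := fun k => Finset.Icc 1 k) (t' := Finset.Icc 1 t)
      (by intro c k; simp only [Finset.mem_Icc]; omega)]
    apply Finset.sum_congr rfl
    intro k hk
    rw [← Finset.sum_mul, htel k]
    simp only [Finset.mem_Icc] at hk
    rw [hw]
    simp only [if_neg (by omega : ¬ k = 0)]
  rw [show (∑ c ∈ Finset.Icc 1 t, ((i c : ℝ) - c) * (x c - a))
      = ∑ c ∈ Finset.Icc 1 t, ((i c : ℝ) - c) * d c from rfl, key]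
  apply Finset.sum_nonneg
  intro c hc
  simp only [Finset.mem_Icc] at hc
  apply mul_nonneg
  · rcases Nat.lt_or_ge c 2 with hc2 | hc2
    · have hc1 : c = 1 := by omega
      subst hc1
      simp only [hw]
      norm_num
      exact_mod_cast hi1
    · have h := hmono (c-1) c (by omega) (by omega) hc.2
      have : i (c-1) + 1 ≤ i c := h
      simp only [hw, if_neg (by omega : ¬ c = 0), if_neg (by omega : ¬ c - 1 = 0)]
      have hcast : ((c-1 : ℕ) : ℝ) = (c:ℝ) - 1 := by
        have : (1:ℕ) ≤ c := by omega
        push_cast [Nat.cast_sub this]; ring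
      rw [hcast]
      have : ((i (c-1) : ℝ)) + 1 ≤ (i c : ℝ) := by exact_mod_cast this
      linarith
  · exact hS c hc.1 hc.2
end

section
/- Let X_1, ..., X_t and Z_1, ..., Z_{n−t} be real numbers with a = (1/t)∑ X_k, and suppose: (i) a dominates all prefix averages of X (a ≥ (1/c)∑_{k=1}^c X_k for 1 ≤ c ≤ t), and (ii) every prefix average of Z is at most a ((1/j)∑_{k=1}^j Z_k ≤ a for 1 ≤ j ≤ n−t). Consider any interleaving of the X-sequence and Z-sequence that preserves the internal order of each. Then the eAUC objective ∑_{k=1}^n (n−k+1)·w_k of the interleaved sequence w is at most that of the sequence (X_1,...,X_t, Z_1,...,Z_{n−t}) which places all X's first. -/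
lemma downclosed_eq_Icc (N : ℕ) (F : Finset ℕ) (hsub : F ⊆ Finset.Icc 1 N)
    (hdown : ∀ i j, i ∈ F → 1 ≤ j → j ≤ i → j ∈ F) : F = Finset.Icc 1 F.card := by
  have h1 : F ⊆ Finset.Icc 1 F.card := by
    intro i hi
    have h1i : 1 ≤ i := (Finset.mem_Icc.mp (hsub hi)).1
    have hIF : Finset.Icc 1 i ⊆ F := by
      intro j hj
      rcases Finset.mem_Icc.mp hj with ⟨hj1, hj2⟩
      exact hdown i j hi hj1 hj2
    have hc := Finset.card_le_card hIF
    simp [Nat.card_Icc] at hc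
    exact Finset.mem_Icc.mpr ⟨h1i, hc⟩
  exact Finset.eq_of_subset_of_card_le h1 (by simp [Nat.card_Icc])

lemma abel_nonneg (t : ℕ) (Y : ℕ → ℝ) (m : ℕ → ℕ)
    (hm : ∀ c c', 1 ≤ c → c ≤ c' → c' ≤ t → m c ≤ m c')
    (hs : ∀ c, 1 ≤ c → c ≤ t → 0 ≤ ∑ k ∈ Finset.Icc c t, Y k) :
    0 ≤ ∑ c ∈ Finset.Icc 1 t, (m c : ℝ) * Y c := by
  set δ : ℕ → ℝ := fun d => if d = 1 then (m 1 : ℝ) else (m d : ℝ) - m (d - 1) with hδ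
  have htel : ∀ c, 1 ≤ c → c ≤ t → (m c : ℝ) = ∑ d ∈ Finset.Icc 1 c, δ d := by
    intro c hc1 hct
    induction c with
    | zero => omega
    | succ c ih =>
      rcases Nat.eq_or_lt_of_le hc1 with h | h
      · simp [← h, hδ]
      · have hc1' : 1 ≤ c := by omega
        rw [Finset.sum_Icc_succ_top (by omega), ← ih hc1' (by omega)]
        have : δ (c + 1) = (m (c + 1) : ℝ) - m c := by
          simp [hδ, Nat.succ_ne_zero]
          intro h'; omega
        rw [this]; ring
  have hδnn : ∀ d, 1 ≤ d → d ≤ t → 0 ≤ δ d := by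
    intro d hd1 hdt
    by_cases h : d = 1
    · simp [hδ, h]
    · have : m (d - 1) ≤ m d := hm (d - 1) d (by omega) (by omega) hdt
      simp only [hδ, if_neg h, sub_nonneg]
      exact_mod_cast this
  calc (0 : ℝ) ≤ ∑ d ∈ Finset.Icc 1 t, δ d * ∑ c ∈ Finset.Icc d t, Y c := by
        apply Finset.sum_nonneg
        intro d hd
        rcases Finset.mem_Icc.mp hd with ⟨hd1, hdt⟩
        exact mul_nonneg (hδnn d hd1 hdt) (hs d hd1 hdt)
    _ = ∑ c ∈ Finset.Icc 1 t, (m c : ℝ) * Y c := by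
        simp_rw [Finset.mul_sum]
        rw [Finset.sum_comm' (s' := fun c => Finset.Icc 1 c) (t' := Finset.Icc 1 t)]
        · apply Finset.sum_congr rfl
          intro c hc
          rcases Finset.mem_Icc.mp hc with ⟨hc1, hct⟩
          rw [htel c hc1 hct, Finset.sum_mul]
        · intro x y
          simp only [Finset.mem_Icc]
          omega

theorem first_subchain_optimal (n t : ℕ) (ht1 : 1 ≤ t) (ht : t ≤ n)
    (X Z w : ℕ → ℝ) (a : ℝ)
    (ha : a = (∑ k ∈ Finset.Icc 1 t, X k) / t)
    (hX : ∀ c, 1 ≤ c → c ≤ t → (∑ k ∈ Finset.Icc 1 c, X k) / c ≤ a)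
    (hZ : ∀ j, 1 ≤ j → j ≤ n - t → (∑ k ∈ Finset.Icc 1 j, Z k) / j ≤ a)
    (e f : ℕ → ℕ)
    (he : StrictMonoOn e (Set.Icc 1 t))
    (hf : StrictMonoOn f (Set.Icc 1 (n - t)))
    (hpart : (Finset.Icc 1 t).image e ∪ (Finset.Icc 1 (n - t)).image f = Finset.Icc 1 n)
    (hdisj : Disjoint ((Finset.Icc 1 t).image e) ((Finset.Icc 1 (n - t)).image f))
    (hwX : ∀ c, 1 ≤ c → c ≤ t → w (e c) = X c)
    (hwZ : ∀ j, 1 ≤ j → j ≤ n - t → w (f j) = Z j) :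
    ∑ k ∈ Finset.Icc 1 n, ((n : ℝ) - k + 1) * w k ≤
      ∑ c ∈ Finset.Icc 1 t, ((n : ℝ) - c + 1) * X c
        + ∑ j ∈ Finset.Icc 1 (n - t), ((n : ℝ) - (t + j) + 1) * Z j := by
  classical
  -- basic membership facts
  have heSet : ∀ c, c ∈ Finset.Icc 1 t → c ∈ Set.Icc 1 t := by
    intro c hc; exact Set.mem_Icc.mpr (Finset.mem_Icc.mp hc)
  have hfSet : ∀ j, j ∈ Finset.Icc 1 (n - t) → j ∈ Set.Icc 1 (n - t) := by
    intro j hj; exact Set.mem_Icc.mpr (Finset.mem_Icc.mp hj)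
  have heMem : ∀ c, c ∈ Finset.Icc 1 t → e c ∈ Finset.Icc 1 n := by
    intro c hc
    rw [← hpart]
    exact Finset.mem_union_left _ (Finset.mem_image_of_mem e hc)
  have hfMem : ∀ j, j ∈ Finset.Icc 1 (n - t) → f j ∈ Finset.Icc 1 n := by
    intro j hj
    rw [← hpart]
    exact Finset.mem_union_right _ (Finset.mem_image_of_mem f hj)
  have heInj : ∀ x ∈ Finset.Icc 1 t, ∀ y ∈ Finset.Icc 1 t, e x = e y → x = y := by
    intro x hx y hy hxy
    exact he.injOn (heSet x hx) (heSet y hy) hxy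
  have hfInj : ∀ x ∈ Finset.Icc 1 (n - t), ∀ y ∈ Finset.Icc 1 (n - t), f x = f y → x = y := by
    intro x hx y hy hxy
    exact hf.injOn (hfSet x hx) (hfSet y hy) hxy
  have hne : ∀ c ∈ Finset.Icc 1 t, ∀ j ∈ Finset.Icc 1 (n - t), e c ≠ f j := by
    intro c hc j hj h
    exact Finset.disjoint_left.mp hdisj (Finset.mem_image_of_mem e hc)
      (h ▸ Finset.mem_image_of_mem f hj)
  -- split the interleaved sum
  have hsplit : ∑ k ∈ Finset.Icc 1 n, ((n : ℝ) - k + 1) * w k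
      = ∑ c ∈ Finset.Icc 1 t, ((n : ℝ) - e c + 1) * X c
        + ∑ j ∈ Finset.Icc 1 (n - t), ((n : ℝ) - f j + 1) * Z j := by
    rw [← hpart, Finset.sum_union hdisj, Finset.sum_image heInj, Finset.sum_image hfInj]
    congr 1
    · apply Finset.sum_congr rfl
      intro c hc
      rcases Finset.mem_Icc.mp hc with ⟨h1, h2⟩
      rw [hwX c h1 h2]
    · apply Finset.sum_congr rfl
      intro j hj
      rcases Finset.mem_Icc.mp hj with ⟨h1, h2⟩
      rw [hwZ j h1 h2]
  set m : ℕ → ℕ := fun c => ((Finset.Icc 1 (n - t)).filter (fun j => f j < e c)).card with hm_def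
  -- fact1 : e c = c + m c
  have fact1 : ∀ c ∈ Finset.Icc 1 t, e c = c + m c := by
    intro c hc
    rcases Finset.mem_Icc.mp hc with ⟨hc1, hct⟩
    have hec := Finset.mem_Icc.mp (heMem c hc)
    have key : (Finset.Icc 1 n).filter (fun k => k < e c) = Finset.Icc 1 (e c - 1) := by
      ext k
      simp only [Finset.mem_filter, Finset.mem_Icc]
      omega
    have hcard1 : ((Finset.Icc 1 n).filter (fun k => k < e c)).card = e c - 1 := by
      rw [key, Nat.card_Icc]; omega
    rw [← hpart, Finset.filter_union,
      Finset.card_union_of_disjoint (hdisj.mono (Finset.filter_subset _ _) (Finset.filter_subset _ _)),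
      Finset.filter_image, Finset.filter_image,
      Finset.card_image_of_injOn (he.injOn.mono (by
        intro x hx
        simp only [Finset.coe_filter, Set.mem_setOf_eq, Finset.mem_Icc] at hx
        exact Set.mem_Icc.mpr hx.1)),
      Finset.card_image_of_injOn (hf.injOn.mono (by
        intro x hx
        simp only [Finset.coe_filter, Set.mem_setOf_eq, Finset.mem_Icc] at hx
        exact Set.mem_Icc.mpr hx.1))] at hcard1
    have h2 : (Finset.Icc 1 t).filter (fun x => e x < e c) = Finset.Icc 1 (c - 1) := by
      ext x
      simp only [Finset.mem_filter, Finset.mem_Icc]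
      constructor
      · rintro ⟨⟨hx1, hxt⟩, hlt⟩
        have : x < c := (he.lt_iff_lt (Set.mem_Icc.mpr ⟨hx1, hxt⟩)
          (Set.mem_Icc.mpr ⟨hc1, hct⟩)).mp hlt
        omega
      · rintro ⟨hx1, hxc⟩
        refine ⟨⟨hx1, by omega⟩, ?_⟩
        exact he (Set.mem_Icc.mpr ⟨hx1, by omega⟩) (Set.mem_Icc.mpr ⟨hc1, hct⟩) (by omega)
    rw [h2, Nat.card_Icc] at hcard1
    have : m c = ((Finset.Icc 1 (n - t)).filter (fun j => f j < e c)).card := rfl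
    omega
  -- fact2 : f j + #{c : f j < e c} = t + j
  have fact2 : ∀ j ∈ Finset.Icc 1 (n - t),
      f j + ((Finset.Icc 1 t).filter (fun c => f j < e c)).card = t + j := by
    intro j hj
    rcases Finset.mem_Icc.mp hj with ⟨hj1, hjn⟩
    have hfj := Finset.mem_Icc.mp (hfMem j hj)
    have key : (Finset.Icc 1 n).filter (fun k => k < f j) = Finset.Icc 1 (f j - 1) := by
      ext k
      simp only [Finset.mem_filter, Finset.mem_Icc]
      omega
    have hcard1 : ((Finset.Icc 1 n).filter (fun k => k < f j)).card = f j - 1 := by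
      rw [key, Nat.card_Icc]; omega
    rw [← hpart, Finset.filter_union,
      Finset.card_union_of_disjoint (hdisj.mono (Finset.filter_subset _ _) (Finset.filter_subset _ _)),
      Finset.filter_image, Finset.filter_image,
      Finset.card_image_of_injOn (he.injOn.mono (by
        intro x hx
        simp only [Finset.coe_filter, Set.mem_setOf_eq, Finset.mem_Icc] at hx
        exact Set.mem_Icc.mpr hx.1)),
      Finset.card_image_of_injOn (hf.injOn.mono (by
        intro x hx
        simp only [Finset.coe_filter, Set.mem_setOf_eq, Finset.mem_Icc] at hx
        exact Set.mem_Icc.mpr hx.1))] at hcard1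
    have h2 : (Finset.Icc 1 (n - t)).filter (fun x => f x < f j) = Finset.Icc 1 (j - 1) := by
      ext x
      simp only [Finset.mem_filter, Finset.mem_Icc]
      constructor
      · rintro ⟨⟨hx1, hxt⟩, hlt⟩
        have : x < j := (hf.lt_iff_lt (Set.mem_Icc.mpr ⟨hx1, hxt⟩)
          (Set.mem_Icc.mpr ⟨hj1, hjn⟩)).mp hlt
        omega
      · rintro ⟨hx1, hxc⟩
        refine ⟨⟨hx1, by omega⟩, ?_⟩
        exact hf (Set.mem_Icc.mpr ⟨hx1, by omega⟩) (Set.mem_Icc.mpr ⟨hj1, hjn⟩) (by omega)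
    rw [h2, Nat.card_Icc] at hcard1
    have h3 := Finset.card_filter_add_card_filter_not
      (s := Finset.Icc 1 t) (p := fun c => e c < f j)
    rw [Nat.card_Icc] at h3
    have h4 : (Finset.Icc 1 t).filter (fun c => ¬ e c < f j)
        = (Finset.Icc 1 t).filter (fun c => f j < e c) := by
      apply Finset.filter_congr
      intro c hc
      have := hne c hc j hj
      simp only [not_lt, eq_iff_iff]
      omega
    rw [h4] at h3
    omega
  -- fact3 : the set of j's paired below e c is an initial segment
  have fact3 : ∀ c ∈ Finset.Icc 1 t,
      (Finset.Icc 1 (n - t)).filter (fun j => f j < e c) = Finset.Icc 1 (m c) := by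
    intro c hc
    have := downclosed_eq_Icc (n - t) ((Finset.Icc 1 (n - t)).filter (fun j => f j < e c))
      (Finset.filter_subset _ _) ?_
    · exact this
    · intro i j hi hj1 hji
      rcases Finset.mem_filter.mp hi with ⟨hiI, hilt⟩
      rcases Finset.mem_Icc.mp hiI with ⟨hi1, hint⟩
      refine Finset.mem_filter.mpr ⟨Finset.mem_Icc.mpr ⟨hj1, by omega⟩, ?_⟩
      have : f j ≤ f i := hf.monotoneOn (Set.mem_Icc.mpr ⟨hj1, by omega⟩)
        (Set.mem_Icc.mpr ⟨hi1, hint⟩) hji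
      omega
  -- m is monotone
  have hmono : ∀ c c', 1 ≤ c → c ≤ c' → c' ≤ t → m c ≤ m c' := by
    intro c c' hc1 hcc hct
    have hee : e c ≤ e c' := he.monotoneOn (Set.mem_Icc.mpr ⟨hc1, by omega⟩)
      (Set.mem_Icc.mpr ⟨by omega, hct⟩) hcc
    apply Finset.card_le_card
    intro j hj
    rcases Finset.mem_filter.mp hj with ⟨hjI, hjlt⟩
    exact Finset.mem_filter.mpr ⟨hjI, by omega⟩
  have hmle : ∀ c ∈ Finset.Icc 1 t, m c ≤ n - t := by
    intro c hc
    calc m c ≤ (Finset.Icc 1 (n - t)).card := Finset.card_filter_le _ _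
      _ = n - t := by rw [Nat.card_Icc]; omega
  -- total and suffix sums for X
  have htpos : (0 : ℝ) < t := by exact_mod_cast ht1
  have htot : ∑ k ∈ Finset.Icc 1 t, X k = t * a := by
    rw [ha]; field_simp
  have hsuffix : ∀ c, 1 ≤ c → c ≤ t → 0 ≤ ∑ k ∈ Finset.Icc c t, (X k - a) := by
    intro c hc1 hct
    have hsplit2 : Finset.Icc 1 t = Finset.Icc 1 (c - 1) ∪ Finset.Icc c t := by
      ext k
      simp only [Finset.mem_union, Finset.mem_Icc]
      omega
    have hdis2 : Disjoint (Finset.Icc 1 (c - 1)) (Finset.Icc c t) := by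
      rw [Finset.disjoint_left]
      intro k hk hk'
      simp only [Finset.mem_Icc] at hk hk'
      omega
    have hpre : ∑ k ∈ Finset.Icc 1 (c - 1), X k ≤ ((c : ℝ) - 1) * a := by
      rcases Nat.eq_or_lt_of_le hc1 with h | h
      · simp [← h]
      · have h1 : 1 ≤ c - 1 := by omega
        have h2 := hX (c - 1) h1 (by omega)
        have hcast : ((c - 1 : ℕ) : ℝ) = (c : ℝ) - 1 := by
          rw [Nat.cast_sub hc1]; norm_num
        have hpos : (0 : ℝ) < ((c - 1 : ℕ) : ℝ) := by
          exact_mod_cast Nat.pos_of_ne_zero (by omega)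
        rw [div_le_iff₀ hpos] at h2
        rw [hcast] at h2
        linarith
    have hsumX : ∑ k ∈ Finset.Icc c t, X k = ∑ k ∈ Finset.Icc 1 t, X k - ∑ k ∈ Finset.Icc 1 (c - 1), X k := by
      rw [hsplit2, Finset.sum_union hdis2]; ring
    rw [Finset.sum_sub_distrib, Finset.sum_const, Nat.card_Icc, nsmul_eq_mul]
    have hcast2 : ((t + 1 - c : ℕ) : ℝ) = (t : ℝ) + 1 - c := by
      push_cast [Nat.cast_sub (by omega : c ≤ t + 1)]; ring
    rw [hsumX, htot, hcast2]
    linarith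
  -- key inequality
  have key : ∑ j ∈ Finset.Icc 1 (n - t), (((t : ℝ) + j) - f j) * Z j
      ≤ ∑ c ∈ Finset.Icc 1 t, ((e c : ℝ) - c) * X c := by
    have stepX : ∑ c ∈ Finset.Icc 1 t, ((e c : ℝ) - c) * X c
        = ∑ c ∈ Finset.Icc 1 t, (m c : ℝ) * X c := by
      apply Finset.sum_congr rfl
      intro c hc
      have h := fact1 c hc
      have : (e c : ℝ) = (c : ℝ) + m c := by exact_mod_cast congrArg (Nat.cast : ℕ → ℝ) h
      rw [this]; ring
    have stepZ : ∑ j ∈ Finset.Icc 1 (n - t), (((t : ℝ) + j) - f j) * Z j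
        = ∑ j ∈ Finset.Icc 1 (n - t),
            (((Finset.Icc 1 t).filter (fun c => f j < e c)).card : ℝ) * Z j := by
      apply Finset.sum_congr rfl
      intro j hj
      have h := fact2 j hj
      have h' : (f j : ℝ) + (((Finset.Icc 1 t).filter (fun c => f j < e c)).card : ℝ)
          = (t : ℝ) + j := by exact_mod_cast congrArg (Nat.cast : ℕ → ℝ) h
      have hq : ((t : ℝ) + j) - f j
          = (((Finset.Icc 1 t).filter (fun c => f j < e c)).card : ℝ) := by linarith
      rw [hq]
    have step3 : ∑ j ∈ Finset.Icc 1 (n - t),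
          ((((Finset.Icc 1 t).filter (fun c => f j < e c)).card : ℝ)) * Z j
        = ∑ c ∈ Finset.Icc 1 t,
            ∑ j ∈ (Finset.Icc 1 (n - t)).filter (fun j => f j < e c), Z j := by
      have hconst : ∀ j ∈ Finset.Icc 1 (n - t),
          ((((Finset.Icc 1 t).filter (fun c => f j < e c)).card : ℝ)) * Z j
          = ∑ c ∈ (Finset.Icc 1 t).filter (fun c => f j < e c), Z j := by
        intro j _
        rw [Finset.sum_const, nsmul_eq_mul]
      rw [Finset.sum_congr rfl hconst]
      exact Finset.sum_comm' (fun x y => by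
        simp only [Finset.mem_filter]
        tauto)
    have step5 : ∑ c ∈ Finset.Icc 1 t,
          ∑ j ∈ (Finset.Icc 1 (n - t)).filter (fun j => f j < e c), Z j
        ≤ ∑ c ∈ Finset.Icc 1 t, (m c : ℝ) * a := by
      apply Finset.sum_le_sum
      intro c hc
      rw [fact3 c hc]
      by_cases h0 : m c = 0
      · simp [h0]
      · have h1 : 1 ≤ m c := by omega
        have h2 := hZ (m c) h1 (hmle c hc)
        have hpos : (0 : ℝ) < (m c : ℝ) := by
          exact_mod_cast Nat.pos_of_ne_zero h0
        rw [div_le_iff₀ hpos] at h2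
        linarith
    have step6 : ∑ c ∈ Finset.Icc 1 t, (m c : ℝ) * a
        ≤ ∑ c ∈ Finset.Icc 1 t, (m c : ℝ) * X c := by
      have h := abel_nonneg t (fun k => X k - a) m hmono hsuffix
      have hx : ∑ c ∈ Finset.Icc 1 t, (m c : ℝ) * (X c - a)
          = ∑ c ∈ Finset.Icc 1 t, (m c : ℝ) * X c
            - ∑ c ∈ Finset.Icc 1 t, (m c : ℝ) * a := by
        rw [← Finset.sum_sub_distrib]
        apply Finset.sum_congr rfl
        intros
        ring
      rw [hx] at h
      linarith
    calc ∑ j ∈ Finset.Icc 1 (n - t), (((t : ℝ) + j) - f j) * Z j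
        = ∑ j ∈ Finset.Icc 1 (n - t),
            ((((Finset.Icc 1 t).filter (fun c => f j < e c)).card : ℝ)) * Z j := stepZ
      _ = ∑ c ∈ Finset.Icc 1 t,
            ∑ j ∈ (Finset.Icc 1 (n - t)).filter (fun j => f j < e c), Z j := step3
      _ ≤ ∑ c ∈ Finset.Icc 1 t, (m c : ℝ) * a := step5
      _ ≤ ∑ c ∈ Finset.Icc 1 t, (m c : ℝ) * X c := step6
      _ = ∑ c ∈ Finset.Icc 1 t, ((e c : ℝ) - c) * X c := stepX.symm
  -- conclude
  rw [hsplit]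
  have e1 : ∑ c ∈ Finset.Icc 1 t, ((n : ℝ) - e c + 1) * X c
      = ∑ c ∈ Finset.Icc 1 t, ((n : ℝ) - c + 1) * X c
        - ∑ c ∈ Finset.Icc 1 t, ((e c : ℝ) - c) * X c := by
    rw [← Finset.sum_sub_distrib]
    apply Finset.sum_congr rfl
    intro c _
    ring
  have e2 : ∑ j ∈ Finset.Icc 1 (n - t), ((n : ℝ) - f j + 1) * Z j
      = ∑ j ∈ Finset.Icc 1 (n - t), ((n : ℝ) - (t + j) + 1) * Z j
        + ∑ j ∈ Finset.Icc 1 (n - t), (((t : ℝ) + j) - f j) * Z j := by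
    rw [← Finset.sum_add_distrib]
    apply Finset.sum_congr rfl
    intro j _
    ring
  rw [e1, e2]
  linarith [key]
end

section
/- Let B₁ and B₂ be two consecutive blocks of real numbers where B₂ is a 'block' in the sense that its full average ℓ_{B₂} is at least the average of every prefix of B₂. If ℓ_{B₁} ≤ ℓ_{B₂}, then for every 1 ≤ i ≤ |B₂|, the average of B₁ concatenated with the first i elements of B₂ satisfies ℓ_{B₁∪B₂(i)} ≤ ℓ_{B₁∪B₂}, with the maximum over all prefixes attained at i = |B₂| (the full concatenation). -/
noncomputable def listMean (l : List ℝ) : ℝ := l.sum / l.length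

theorem block_agglomerate (B₁ B₂ : List ℝ) (h₁ : B₁ ≠ []) (h₂ : B₂ ≠ [])
    (hblock : ∀ i, 1 ≤ i → i ≤ B₂.length → listMean (B₂.take i) ≤ listMean B₂)
    (hle : listMean B₁ ≤ listMean B₂) :
    ∀ i, 1 ≤ i → i ≤ B₂.length →
      listMean (B₁ ++ B₂.take i) ≤ listMean (B₁ ++ B₂) := by
  intro i hi him
  have hn : 0 < B₁.length := List.length_pos_iff.mpr h₁
  have hm : 0 < B₂.length := List.length_pos_iff.mpr h₂
  have hbi := hblock i hi him
  set S := B₁.sum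
  set T := B₂.sum
  set Ti := (B₂.take i).sum
  set n := B₁.length
  set m := B₂.length
  have hti : (B₂.take i).length = i := by
    simp [List.length_take, Nat.min_eq_left him]
    exact him
  have hnR : (0:ℝ) < n := by exact_mod_cast hn
  have hmR : (0:ℝ) < m := by exact_mod_cast hm
  have hiR : (0:ℝ) < i := by exact_mod_cast hi
  have himR : (i:ℝ) ≤ m := by exact_mod_cast him
  have h1 : S / n ≤ T / m := hle
  have h2 : Ti / i ≤ T / m := by
    simpa [listMean, hti] using hbi
  have hSm : S * m ≤ T * n := by
    have := (div_le_div_iff₀ hnR hmR).mp h1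
    linarith
  have hTim : Ti * m ≤ T * i := by
    have := (div_le_div_iff₀ hiR hmR).mp h2
    linarith
  have goal : (S + Ti) / (n + i) ≤ (S + T) / (n + m) := by
    rw [div_le_div_iff₀ (by linarith) (by linarith)]
    nlinarith [mul_le_mul_of_nonneg_left hSm (by linarith : (0:ℝ) ≤ m - i),
      mul_le_mul_of_nonneg_left hTim (by linarith : (0:ℝ) ≤ n),
      mul_le_mul_of_nonneg_left hTim (by linarith : (0:ℝ) ≤ (1:ℝ))]
  simpa [listMean, List.sum_append, List.length_append, hti] using goal
end

section
/- Let B₁ and B₂ be consecutive blocks of real numbers, where B₂ satisfies the block property (its full average dominates all its prefix averages). If ℓ_{B₁} > ℓ_{B₂}, then for every 1 ≤ i ≤ |B₂|, the average of B₁ concatenated with the first i elements of B₂ is strictly less than ℓ_{B₁}. Hence no element of B₂ joins B₁ when re-forming blocks. -/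
theorem block_no_join (B₁ B₂ : List ℝ) (h₁ : B₁ ≠ []) (h₂ : B₂ ≠ [])
    (hblock : ∀ i, 1 ≤ i → i ≤ B₂.length → listMean (B₂.take i) ≤ listMean B₂)
    (hgt : listMean B₂ < listMean B₁) :
    ∀ i, 1 ≤ i → i ≤ B₂.length →
      listMean (B₁ ++ B₂.take i) < listMean B₁ := by
  intro i hi1 hi2
  have hm : 0 < (B₁.length : ℝ) := by
    have := List.length_pos_iff.mpr h₁; exact_mod_cast this
  have hi : 0 < (i : ℝ) := by exact_mod_cast hi1
  have hlen : (B₂.take i).length = i := by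
    simp [List.length_take, Nat.min_eq_left hi2]
  have hT : (B₂.take i).sum / (i : ℝ) < B₁.sum / B₁.length := by
    have h1 := hblock i hi1 hi2
    unfold listMean at h1 hgt
    rw [hlen] at h1
    exact lt_of_le_of_lt h1 hgt
  unfold listMean
  rw [List.sum_append, List.length_append, hlen]
  rw [div_lt_div_iff₀ (by push_cast; linarith) hm]
  rw [div_lt_div_iff₀ hi hm] at hT
  push_cast
  nlinarith
end

section
/- Let x_1, ..., x_n be any real sequence. Define breaking points recursively: p₁ is the largest index maximizing the prefix average (1/i)∑_{k=1}^i x_k over 1 ≤ i ≤ n, and p_{j+1} is the largest index i > p_j maximizing the average of x_{p_j+1},...,x_i. Then the resulting block averages are strictly decreasing: the average of block j+1 is strictly less than the average of block j. -/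
/-- Average of the segment `x_{a+1}, ..., x_b`. -/
noncomputable def segAvg (x : ℕ → ℝ) (a b : ℕ) : ℝ :=
  (∑ k ∈ Finset.Ioc a b, x k) / ((b : ℝ) - a)

theorem block_averages_strict_decreasing (x : ℕ → ℝ) (n p q r : ℕ)
    (hpq : p < q) (hqn : q ≤ n) (hqr : q < r) (hrn : r ≤ n)
    (hqmax : ∀ i, p < i → i ≤ n → segAvg x p i ≤ segAvg x p q)
    (hqlargest : ∀ i, q < i → i ≤ n → segAvg x p i < segAvg x p q)
    (hrmax : ∀ i, q < i → i ≤ n → segAvg x q i ≤ segAvg x q r) :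
    segAvg x q r < segAvg x p q := by
  have hpr := hqlargest r hqr hrn
  set S1 := ∑ k ∈ Finset.Ioc p q, x k with hS1
  set S2 := ∑ k ∈ Finset.Ioc q r, x k with hS2
  have hsplit : ∑ k ∈ Finset.Ioc p r, x k = S1 + S2 := by
    rw [hS1, hS2, Finset.sum_Ioc_consecutive _ hpq.le hqr.le]
  have ha : (0:ℝ) < (q:ℝ) - p := by
    have := hpq; push_cast [sub_pos]; exact_mod_cast this
  have hb : (0:ℝ) < (r:ℝ) - q := by
    have := hqr; push_cast [sub_pos]; exact_mod_cast this
  have hab : (r:ℝ) - p = ((q:ℝ) - p) + ((r:ℝ) - q) := by ring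
  unfold segAvg at hpr ⊢
  rw [hsplit, hab, div_lt_div_iff₀ (by linarith) ha] at hpr
  rw [div_lt_div_iff₀ hb ha]
  nlinarith [hpr]
end
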